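/- Let n ∈ ℕ₊, α ∈ (0,1), δ ≥ 0, let H̃ ∈ ℝ^{n×n} be symmetric positive semidefinite, λ ≥ 0, Ω = [I, −I] ∈ ℝ^{n×2n}, τ > 0, and let x, s, x̃, s̃ ∈ ℝ^{2n} have all components positive. Assume ‖x ⊙ s − τe‖ ≤ ατ, assume x̃ᵢ/xᵢ ∈ [1/(1+δ), 1+δ] and s̃ᵢ/sᵢ ∈ [1/(1+δ), 1+δ] for every i, and suppose Δz ∈ ℝ^n and Δx, Δs ∈ ℝ^{2n} satisfy the approximated Newton system: 2λH̃Δz + ΩΔx = 0, ΩᵀΔz + Δs = 0, and s̃ ⊙ Δx + x̃ ⊙ Δs = τe − x ⊙ s. Then, with η = (1+δ)³α/(1−α), it holds that ‖Δx/x‖ ≤ η and ‖Δs/s‖ ≤ η. -/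

import Mathlib

open Matrix

/-- Euclidean norm of a finitely-indexed real vector. -/
noncomputable def euclidNorm {ι : Type*} [Fintype ι] (v : ι → ℝ) : ℝ :=
  Real.sqrt (∑ i, v i ^ 2)

lemma aux_bound {ι : Type*} [Fintype ι] (c A B : ℝ) (hc : 1 ≤ c) (hA : 0 < A) (hB : 0 ≤ B)
    (x s xt st Δx : ι → ℝ)
    (hx : ∀ i, 0 < x i) (hs : ∀ i, 0 < s i) (hxt : ∀ i, 0 < xt i) (hst : ∀ i, 0 < st i)
    (hxs : ∀ i, A ≤ x i * s i)
    (hxtu : ∀ i, xt i ≤ c * x i) (hstl : ∀ i, s i ≤ c * st i)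
    (hkey : ∑ i, (st i * Δx i) ^ 2 / (xt i * st i) ≤ c ^ 2 * B ^ 2 / A) :
    Real.sqrt (∑ i, (Δx i / x i) ^ 2) ≤ c ^ 2 * B / A := by
  have hc0 : (0:ℝ) < c := lt_of_lt_of_le one_pos hc
  have hpw : ∀ i, (Δx i / x i) ^ 2 ≤ (c ^ 2 / A) * ((st i * Δx i) ^ 2 / (xt i * st i)) := by
    intro i
    have h1 : (st i * Δx i) ^ 2 / (xt i * st i) = st i * Δx i ^ 2 / xt i := by
      rw [div_eq_div_iff (mul_pos (hxt i) (hst i)).ne' (hxt i).ne']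
      ring
    rw [h1, div_pow, div_mul_div_comm,
      div_le_div_iff₀ (pow_pos (hx i) 2) (mul_pos hA (hxt i))]
    have h2 : A * xt i ≤ c ^ 2 * (st i * x i ^ 2) := by
      nlinarith [hx i, hs i, hxt i, hst i, hxs i, hxtu i, hstl i,
        mul_le_mul_of_nonneg_right (hxs i) (hxt i).le,
        mul_le_mul_of_nonneg_left (hxtu i) (mul_pos (hx i) (hs i)).le,
        mul_le_mul_of_nonneg_left (hstl i) (mul_pos hc0 (mul_pos (hx i) (hx i))).le]
    calc Δx i ^ 2 * (A * xt i) ≤ Δx i ^ 2 * (c ^ 2 * (st i * x i ^ 2)) :=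
          mul_le_mul_of_nonneg_left h2 (sq_nonneg _)
      _ = c ^ 2 * (st i * Δx i ^ 2) * x i ^ 2 := by ring
  have hsum2 : ∑ i, (Δx i / x i) ^ 2 ≤ (c ^ 2 * B / A) ^ 2 := by
    calc ∑ i, (Δx i / x i) ^ 2
        ≤ ∑ i, (c ^ 2 / A) * ((st i * Δx i) ^ 2 / (xt i * st i)) :=
          Finset.sum_le_sum fun i _ => hpw i
      _ = (c ^ 2 / A) * ∑ i, (st i * Δx i) ^ 2 / (xt i * st i) := by rw [Finset.mul_sum]
      _ ≤ (c ^ 2 / A) * (c ^ 2 * B ^ 2 / A) := mul_le_mul_of_nonneg_left hkey (by positivity)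
      _ = (c ^ 2 * B / A) ^ 2 := by field_simp
  have h := Real.sqrt_le_sqrt hsum2
  rwa [Real.sqrt_sq (by positivity)] at h

/-- for the approximated Newton step, with `η = (1+δ)³α/(1−α)`, one has
`‖Δx/x‖ ≤ η` and `‖Δs/s‖ ≤ η`. -/
theorem approx_newton_relative_step_bound (n : ℕ) (hn : 0 < n)
    (α δ : ℝ) (hα : α ∈ Set.Ioo (0:ℝ) 1) (hδ : 0 ≤ δ)
    (Ht : Matrix (Fin n) (Fin n) ℝ) (hHt : Ht.PosSemidef)
    (lam : ℝ) (hlam : 0 ≤ lam)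
    (Ω : Matrix (Fin n) (Fin n ⊕ Fin n) ℝ)
    (hΩ : Ω = Matrix.fromCols (1 : Matrix (Fin n) (Fin n) ℝ) (-1))
    (τ : ℝ) (hτ : 0 < τ)
    (x s xt st : Fin n ⊕ Fin n → ℝ)
    (hx : ∀ i, 0 < x i) (hs : ∀ i, 0 < s i)
    (hxt : ∀ i, 0 < xt i) (hst : ∀ i, 0 < st i)
    (hcen : Real.sqrt (∑ i, (x i * s i - τ) ^ 2) ≤ α * τ)
    (hratx : ∀ i, xt i / x i ∈ Set.Icc (1 / (1 + δ)) (1 + δ))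
    (hrats : ∀ i, st i / s i ∈ Set.Icc (1 / (1 + δ)) (1 + δ))
    (Δz : Fin n → ℝ) (Δx Δs : Fin n ⊕ Fin n → ℝ)
    (heq1 : (2 * lam) • Ht.mulVec Δz + Ω.mulVec Δx = 0)
    (heq2 : Ωᵀ.mulVec Δz + Δs = 0)
    (heq3 : (fun i => st i * Δx i + xt i * Δs i) = fun i => τ - x i * s i)
    (η : ℝ) (hη : η = (1 + δ) ^ 3 * α / (1 - α)) :
    euclidNorm (fun i => Δx i / x i) ≤ η ∧ euclidNorm (fun i => Δs i / s i) ≤ η := by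
  obtain ⟨hα0, hα1⟩ := hα
  set c : ℝ := 1 + δ with hc
  have hc1 : 1 ≤ c := by rw [hc]; linarith
  have hc0 : (0:ℝ) < c := lt_of_lt_of_le one_pos hc1
  set A : ℝ := (1 - α) * τ with hA
  have hApos : 0 < A := mul_pos (by linarith) hτ
  set B : ℝ := α * τ with hB
  have hBpos : 0 < B := mul_pos hα0 hτ
  -- sum of squares bound
  have hS0 : (0:ℝ) ≤ ∑ i, (x i * s i - τ) ^ 2 := Finset.sum_nonneg fun i _ => sq_nonneg _
  have hsumsq : ∑ i, (x i * s i - τ) ^ 2 ≤ B ^ 2 := by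
    nlinarith [Real.sq_sqrt hS0, Real.sqrt_nonneg (∑ i, (x i * s i - τ) ^ 2)]
  -- componentwise lower bound on x*s
  have hxs : ∀ i, A ≤ x i * s i := by
    intro i
    have h1 : (x i * s i - τ) ^ 2 ≤ ∑ j, (x j * s j - τ) ^ 2 :=
      Finset.single_le_sum (f := fun j => (x j * s j - τ) ^ 2)
        (fun j _ => sq_nonneg _) (Finset.mem_univ i)
    have h2 : (x i * s i - τ) ^ 2 ≤ B ^ 2 := le_trans h1 hsumsq
    nlinarith [hτ, hα0, hα1]
  -- ratio bounds
  have hxtu : ∀ i, xt i ≤ c * x i := by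
    intro i
    have h := (hratx i).2
    rw [div_le_iff₀ (hx i)] at h
    linarith [h]
  have hxtl : ∀ i, x i ≤ c * xt i := by
    intro i
    have h := (hratx i).1
    rw [div_le_div_iff₀ hc0 (hx i)] at h
    linarith [h]
  have hstu : ∀ i, st i ≤ c * s i := by
    intro i
    have h := (hrats i).2
    rw [div_le_iff₀ (hs i)] at h
    linarith [h]
  have hstl : ∀ i, s i ≤ c * st i := by
    intro i
    have h := (hrats i).1
    rw [div_le_div_iff₀ hc0 (hs i)] at h
    linarith [h]
  -- orthogonality
  have horth : 0 ≤ ∑ j, Δx j * Δs j := by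
    have h2 : Δs = -(Ωᵀ.mulVec Δz) := by
      funext j
      have h := congrFun heq2 j
      simp only [Pi.add_apply, Pi.zero_apply, Pi.neg_apply] at h ⊢
      linarith
    have h1 : Ω.mulVec Δx = -((2 * lam) • Ht.mulVec Δz) := by
      funext j
      have h := congrFun heq1 j
      simp only [Pi.add_apply, Pi.zero_apply, Pi.neg_apply, Pi.smul_apply, smul_eq_mul] at h ⊢
      linarith
    have hdp : ∑ j, Δx j * Δs j = Δx ⬝ᵥ Δs := rfl
    rw [hdp, h2, dotProduct_neg, Matrix.dotProduct_mulVec, Matrix.vecMul_transpose, h1,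
      neg_dotProduct, neg_neg, smul_dotProduct, smul_eq_mul]
    have hps := hHt.dotProduct_mulVec_nonneg Δz
    rw [star_trivial] at hps
    rw [dotProduct_comm] at hps
    exact mul_nonneg (by linarith) hps
  -- pointwise identity
  have hpt : ∀ i, (st i * Δx i) ^ 2 / (xt i * st i) + 2 * (Δx i * Δs i)
      + (xt i * Δs i) ^ 2 / (xt i * st i) = (τ - x i * s i) ^ 2 / (xt i * st i) := by
    intro i
    have hr : st i * Δx i + xt i * Δs i = τ - x i * s i := congrFun heq3 i
    have hw : xt i * st i ≠ 0 := (mul_pos (hxt i) (hst i)).ne'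
    rw [← hr]
    rw [eq_div_iff hw]
    simp only [add_mul, div_mul_cancel₀ _ hw]
    ring
  have hsplit : ∑ i, (st i * Δx i) ^ 2 / (xt i * st i) + 2 * ∑ i, Δx i * Δs i
      + ∑ i, (xt i * Δs i) ^ 2 / (xt i * st i) = ∑ i, (τ - x i * s i) ^ 2 / (xt i * st i) := by
    rw [Finset.mul_sum, ← Finset.sum_add_distrib, ← Finset.sum_add_distrib]
    exact Finset.sum_congr rfl fun i _ => hpt i
  have hnn1 : (0:ℝ) ≤ ∑ i, (st i * Δx i) ^ 2 / (xt i * st i) :=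
    Finset.sum_nonneg fun i _ => div_nonneg (sq_nonneg _) (mul_pos (hxt i) (hst i)).le
  have hnn2 : (0:ℝ) ≤ ∑ i, (xt i * Δs i) ^ 2 / (xt i * st i) :=
    Finset.sum_nonneg fun i _ => div_nonneg (sq_nonneg _) (mul_pos (hxt i) (hst i)).le
  -- bound on ∑ r²/w
  have hrsum : ∑ i, (τ - x i * s i) ^ 2 / (xt i * st i) ≤ c ^ 2 * B ^ 2 / A := by
    have hw : ∀ i, A / c ^ 2 ≤ xt i * st i := by
      intro i
      rw [div_le_iff₀ (pow_pos hc0 2)]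
      nlinarith [hxtl i, hstl i, hxs i, hx i, hs i, hxt i, hst i,
        mul_le_mul (hxtl i) (hstl i) (hs i).le (mul_pos hc0 (hxt i)).le]
    calc ∑ i, (τ - x i * s i) ^ 2 / (xt i * st i)
        ≤ ∑ i, (τ - x i * s i) ^ 2 * (c ^ 2 / A) := by
          apply Finset.sum_le_sum
          intro i _
          have h := div_le_div_of_nonneg_left (sq_nonneg (τ - x i * s i))
            (div_pos hApos (pow_pos hc0 2)) (hw i)
          rw [div_div_eq_mul_div] at h
          calc (τ - x i * s i) ^ 2 / (xt i * st i) ≤ (τ - x i * s i) ^ 2 * c ^ 2 / A := h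
            _ = (τ - x i * s i) ^ 2 * (c ^ 2 / A) := by ring
      _ = (∑ i, (τ - x i * s i) ^ 2) * (c ^ 2 / A) := by rw [← Finset.sum_mul]
      _ ≤ B ^ 2 * (c ^ 2 / A) := by
          apply mul_le_mul_of_nonneg_right _ (by positivity)
          calc (∑ i, (τ - x i * s i) ^ 2) = ∑ i, (x i * s i - τ) ^ 2 := by
                apply Finset.sum_congr rfl
                intro i _
                ring
            _ ≤ B ^ 2 := hsumsq
      _ = c ^ 2 * B ^ 2 / A := by ring
  have hkeyx : ∑ i, (st i * Δx i) ^ 2 / (xt i * st i) ≤ c ^ 2 * B ^ 2 / A := by linarith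
  have hkeys : ∑ i, (xt i * Δs i) ^ 2 / (st i * xt i) ≤ c ^ 2 * B ^ 2 / A := by
    have : ∑ i, (xt i * Δs i) ^ 2 / (st i * xt i)
        = ∑ i, (xt i * Δs i) ^ 2 / (xt i * st i) := by
      apply Finset.sum_congr rfl
      intro i _
      rw [mul_comm (st i) (xt i)]
    rw [this]
    linarith
  have hbx := aux_bound c A B hc1 hApos hBpos.le x s xt st Δx hx hs hxt hst hxs hxtu hstl hkeyx
  have hbs := aux_bound c A B hc1 hApos hBpos.le s x st xt Δs hs hx hst hxt
    (fun i => by rw [mul_comm]; exact hxs i) hstu hxtl hkeys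
  have hfinal : c ^ 2 * B / A ≤ η := by
    have hcc : c ^ 2 ≤ c ^ 3 := pow_le_pow_right₀ (by linarith) (by norm_num)
    have h1 : c ^ 2 * (α * τ * (1 - α)) ≤ c ^ 3 * (α * τ * (1 - α)) :=
      mul_le_mul_of_nonneg_right hcc
        (mul_nonneg (mul_nonneg hα0.le hτ.le) (by linarith))
    rw [hη, hB, hA]
    rw [div_le_div_iff₀ (mul_pos (by linarith) hτ) (by linarith)]
    calc c ^ 2 * (α * τ) * (1 - α) = c ^ 2 * (α * τ * (1 - α)) := by ring
      _ ≤ c ^ 3 * (α * τ * (1 - α)) := h1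
      _ = c ^ 3 * α * ((1 - α) * τ) := by ring
  exact ⟨le_trans hbx hfinal, le_trans hbs hfinal⟩
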